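/- If an LTS is thread-consistent with respect to a mapping thr : Act → T and an equivalence relation ≡ on Act, then the relation ⌣_T = {(a,b) | thr(a) ≠ thr(b)} is a concurrency relation for that LTS, provided that a ≡ c implies thr(a) = thr(c) for all actions a, c. -/

import Mathlib

section
variable {S A : Type*}

/-- An action `a` is enabled in state `s` of an LTS with transition relation `Tr`. -/
def EnabledIn (Tr : S → A → S → Prop) (a : A) (s : S) : Prop := ∃ s', Tr s a s'

/-- A (finite) path from a state to a state, recorded by its list of actions. -/
inductive PathFrom (Tr : S → A → S → Prop) : S → List A → S → Prop
  | nil (s : S) : PathFrom Tr s [] s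
  | cons {s s' s'' : S} {a : A} {l : List A} :
      Tr s a s' → PathFrom Tr s' l s'' → PathFrom Tr s (a :: l) s''

/-- `conc` is a concurrency relation w.r.t. the equivalence `equiv` on actions. -/
def IsConcRel (Tr : S → A → S → Prop) (equiv : A → A → Prop) (conc : A → A → Prop) : Prop :=
  (∀ a b : A, equiv a b → ¬ conc a b) ∧
  (∀ (a : A) (s s' : S) (l : List A), PathFrom Tr s l s' → EnabledIn Tr a s →
    (∀ b ∈ l, conc a b) → ∃ c : A, equiv a c ∧ EnabledIn Tr c s')

/-- Thread-consistency of an LTS w.r.t. a thread-id mapping `thr` and equivalence `equiv`: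
whenever `a` is enabled in `s` and `s →ᵇ s'` with `thr a ≠ thr b`, some action equivalent
to `a` is enabled in `s'`. -/
def ThreadConsistent {T : Type*} (Tr : S → A → S → Prop) (thr : A → T)
    (equiv : A → A → Prop) : Prop :=
  ∀ (s s' : S) (a b : A), EnabledIn Tr a s → Tr s b s' → thr a ≠ thr b →
    ∃ c : A, equiv a c ∧ EnabledIn Tr c s'

/-- In a thread-consistent LTS (with `equiv` respecting thread ids), the thread
interference relation `⌣_T = {(a,b) | thr a ≠ thr b}` is a concurrency relation. -/
theorem threadInterference_is_concurrency_relation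
    {T : Type*} (Tr : S → A → S → Prop) (thr : A → T) (equiv : A → A → Prop)
    (hequiv : Equivalence equiv)
    (hthr : ∀ a c : A, equiv a c → thr a = thr c)
    (hTC : ThreadConsistent Tr thr equiv) :
    IsConcRel Tr equiv (fun a b => thr a ≠ thr b) := by
  constructor
  · intro a b hab hne
    exact hne (hthr a b hab)
  · intro a s s' l hpath
    induction hpath generalizing a with
    | nil s =>
      intro ha _
      exact ⟨a, hequiv.refl a, ha⟩
    | @cons s s' s'' b l htr hpath ih =>
      intro ha hconc
      have hne : thr a ≠ thr b := hconc b List.mem_cons_self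
      obtain ⟨c, hac, hc⟩ := hTC s s' a b ha htr hne
      have hconc' : ∀ b' ∈ l, thr c ≠ thr b' := by
        intro b' hb'
        rw [← hthr a c hac]
        exact hconc b' (List.mem_cons_of_mem _ hb')
      obtain ⟨d, hcd, hd⟩ := ih c hc hconc'
      exact ⟨d, hequiv.trans hac hcd, hd⟩

end
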